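/- Define f_α(θ) = tanh(½(θ + iπα))/tanh(½(θ − iπα)) for complex θ, and let S₁₁(θ) = −f_{10/18}(θ) · f_{2/18}(θ) be the A₁A₁ scattering amplitude of the E₇ model. Then (θ − 10iπ/18) · S₁₁(θ) tends to i · 2√3 · (cos(π/18)/sin(π/18)) · (cos(2π/9)/sin(2π/9)) as θ → 10iπ/18 (limit along complex θ ≠ 10iπ/18). Equivalently, the residue of S₁₁ at the A₂ bound state pole equals i·|Γ₁₁²|² with |Γ₁₁²|² = 2√3 · cot(π/18) · cot(2π/9). -/

import Mathlib

open Filter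

/-- The S-matrix building block `f_α(θ) = tanh(½(θ+iπα))/tanh(½(θ−iπα))`. -/
noncomputable def fblock (α : ℝ) (θ : ℂ) : ℂ :=
  Complex.tanh ((θ + Complex.I * (Real.pi : ℂ) * (α : ℂ)) / 2) /
    Complex.tanh ((θ - Complex.I * (Real.pi : ℂ) * (α : ℂ)) / 2)

/-- The A₁A₁ scattering amplitude of the E₇ model, `S₁₁ = −f_{10/18}·f_{2/18}`. -/
noncomputable def S11 (θ : ℂ) : ℂ := -fblock (10 / 18) θ * fblock (2 / 18) θ

lemma tanh_hasDerivAt_zero : HasDerivAt Complex.tanh 1 0 := by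
  have h : HasDerivAt (fun z : ℂ => Complex.sinh z / Complex.cosh z)
      ((Complex.cosh 0 * Complex.cosh 0 - Complex.sinh 0 * Complex.sinh 0) / Complex.cosh 0 ^ 2) 0 :=
    (Complex.hasDerivAt_sinh 0).div (Complex.hasDerivAt_cosh 0) (by simp)
  rw [show Complex.tanh = fun z => Complex.sinh z / Complex.cosh z from by funext z; rw [Complex.tanh_eq_sinh_div_cosh]]
  simpa [Complex.tanh_eq_sinh_div_cosh] using h

lemma lim_z_div_tanh : Tendsto (fun z : ℂ => z / Complex.tanh z) (nhdsWithin 0 {0}ᶜ) (nhds 1) := by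
  have h := hasDerivAt_iff_tendsto_slope.mp tanh_hasDerivAt_zero
  have h2 : Tendsto (fun z : ℂ => Complex.tanh z / z) (nhdsWithin 0 {0}ᶜ) (nhds 1) := by
    refine h.congr' ?_
    filter_upwards with z
    simp [slope_def_field]
  have := h2.inv₀ one_ne_zero
  simpa [one_div] using this.congr (by intro z; rw [inv_div])

lemma tanh_continuousAt {z : ℂ} (h : Complex.cosh z ≠ 0) : ContinuousAt Complex.tanh z := by
  have : ContinuousAt (fun w : ℂ => Complex.sinh w / Complex.cosh w) z :=
    Complex.continuous_sinh.continuousAt.div Complex.continuous_cosh.continuousAt h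
  rw [show Complex.tanh = fun z => Complex.sinh z / Complex.cosh z from by funext z; rw [Complex.tanh_eq_sinh_div_cosh]]
  simpa [Complex.tanh_eq_sinh_div_cosh] using this


set_option maxHeartbeats 1000000 in
/-- the residue of `S₁₁` at the A₂ bound state pole `θ = 10iπ/18` equals
`i·|Γ₁₁²|²` with `|Γ₁₁²|² = 2√3·cot(π/18)·cot(2π/9)`. -/
theorem S11_residue_at_A2 :
    Tendsto (fun θ : ℂ => (θ - 10 * (Real.pi : ℂ) * Complex.I / 18) * S11 θ)
      (nhdsWithin (10 * (Real.pi : ℂ) * Complex.I / 18)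
        {(10 * (Real.pi : ℂ) * Complex.I / 18 : ℂ)}ᶜ)
      (nhds (Complex.I *
        ((2 * Real.sqrt 3 * (Real.cos (Real.pi / 18) / Real.sin (Real.pi / 18)) *
          (Real.cos (2 * Real.pi / 9) / Real.sin (2 * Real.pi / 9)) : ℝ) : ℂ))) := by
  have hπ := Real.pi_pos
  set θ₀ : ℂ := 10 * (Real.pi : ℂ) * Complex.I / 18 with hθ₀
  -- argument simplifications
  have hA : (θ₀ + θ₀) / 2 = ((10 * Real.pi / 18 : ℝ) : ℂ) * Complex.I := by
    rw [hθ₀]; push_cast; ring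
  have hB : (θ₀ + Complex.I * (Real.pi : ℂ) * ((2 / 18 : ℝ) : ℂ)) / 2
      = ((Real.pi / 3 : ℝ) : ℂ) * Complex.I := by
    rw [hθ₀]; push_cast; ring
  have hC : (θ₀ - Complex.I * (Real.pi : ℂ) * ((2 / 18 : ℝ) : ℂ)) / 2
      = ((2 * Real.pi / 9 : ℝ) : ℂ) * Complex.I := by
    rw [hθ₀]; push_cast; ring
  -- real trig facts
  have hsin18 : Real.sin (Real.pi / 18) > 0 :=
    Real.sin_pos_of_pos_of_lt_pi (by positivity) (by linarith)
  have hcos29 : Real.cos (2 * Real.pi / 9) > 0 :=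
    Real.cos_pos_of_mem_Ioo ⟨by nlinarith, by nlinarith⟩
  have hsin29 : Real.sin (2 * Real.pi / 9) > 0 :=
    Real.sin_pos_of_pos_of_lt_pi (by positivity) (by nlinarith)
  have e1 : Real.sin (10 * Real.pi / 18) = Real.cos (Real.pi / 18) := by
    have h : (10 * Real.pi / 18 : ℝ) = Real.pi / 2 + Real.pi / 18 := by ring
    rw [h, Real.sin_add]; simp
  have e2 : Real.cos (10 * Real.pi / 18) = -Real.sin (Real.pi / 18) := by
    have h : (10 * Real.pi / 18 : ℝ) = Real.pi / 2 + Real.pi / 18 := by ring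
    rw [h, Real.cos_add]; simp
  -- nonvanishing of the relevant cosh's
  have hcoshA : Complex.cosh ((θ₀ + θ₀) / 2) ≠ 0 := by
    rw [hA, Complex.cosh_mul_I, ← Complex.ofReal_cos, e2]
    exact_mod_cast neg_ne_zero.mpr hsin18.ne'
  have hcoshB : Complex.cosh ((θ₀ + Complex.I * (Real.pi : ℂ) * ((2 / 18 : ℝ) : ℂ)) / 2) ≠ 0 := by
    rw [hB, Complex.cosh_mul_I, ← Complex.ofReal_cos, Real.cos_pi_div_three]
    norm_num
  have hcoshC : Complex.cosh ((θ₀ - Complex.I * (Real.pi : ℂ) * ((2 / 18 : ℝ) : ℂ)) / 2) ≠ 0 := by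
    rw [hC, Complex.cosh_mul_I, ← Complex.ofReal_cos]
    exact_mod_cast hcos29.ne'
  have htanhC : Complex.tanh ((θ₀ - Complex.I * (Real.pi : ℂ) * ((2 / 18 : ℝ) : ℂ)) / 2) ≠ 0 := by
    rw [hC, Complex.tanh_mul_I, ← Complex.ofReal_tan]
    have : Real.tan (2 * Real.pi / 9) > 0 := by
      rw [Real.tan_eq_sin_div_cos]; positivity
    exact mul_ne_zero (by exact_mod_cast this.ne') Complex.I_ne_zero
  -- the algebraic identity
  have key : ∀ θ : ℂ, (θ - θ₀) * S11 θ =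
      ((θ - θ₀) / Complex.tanh ((θ - θ₀) / 2)) *
        (-Complex.tanh ((θ + θ₀) / 2) * fblock (2 / 18) θ) := by
    intro θ
    have h1 : (θ + Complex.I * (Real.pi : ℂ) * ((10 / 18 : ℝ) : ℂ)) / 2 = (θ + θ₀) / 2 := by
      rw [hθ₀]; push_cast; ring
    have h2 : (θ - Complex.I * (Real.pi : ℂ) * ((10 / 18 : ℝ) : ℂ)) / 2 = (θ - θ₀) / 2 := by
      rw [hθ₀]; push_cast; ring
    simp only [S11, fblock, h1, h2]
    ring
  -- part A : limit 2
  have hmap : Tendsto (fun θ : ℂ => (θ - θ₀) / 2) (nhdsWithin θ₀ {θ₀}ᶜ) (nhdsWithin 0 {0}ᶜ) := by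
    refine tendsto_nhdsWithin_iff.mpr ⟨?_, ?_⟩
    · have : Tendsto (fun θ : ℂ => (θ - θ₀) / 2) (nhds θ₀) (nhds ((θ₀ - θ₀) / 2)) :=
        ((continuous_id.sub continuous_const).div_const 2).continuousAt
      simpa using this.mono_left nhdsWithin_le_nhds
    · filter_upwards [self_mem_nhdsWithin] with θ hθ
      simp only [Set.mem_compl_iff, Set.mem_singleton_iff] at hθ ⊢
      intro h
      apply hθ
      have : θ - θ₀ = 0 := by
        field_simp at h; simpa using h
      exact sub_eq_zero.mp this
  have limA : Tendsto (fun θ : ℂ => (θ - θ₀) / Complex.tanh ((θ - θ₀) / 2))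
      (nhdsWithin θ₀ {θ₀}ᶜ) (nhds 2) := by
    have h2 := (lim_z_div_tanh.comp hmap).const_mul (2 : ℂ)
    simp only [Function.comp_def] at h2
    simpa using h2.congr (fun θ => by ring)
  have cB : ContinuousAt (fun θ : ℂ => -Complex.tanh ((θ + θ₀) / 2) * fblock (2 / 18) θ) θ₀ := by
    have l1 : ContinuousAt (fun θ : ℂ => Complex.tanh ((θ + θ₀) / 2)) θ₀ := by
      have h : ContinuousAt (fun θ : ℂ => Complex.sinh ((θ + θ₀) / 2) / Complex.cosh ((θ + θ₀) / 2)) θ₀ :=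
        ContinuousAt.div ((Complex.continuous_sinh.comp ((continuous_id.add continuous_const).div_const 2)).continuousAt)
          ((Complex.continuous_cosh.comp ((continuous_id.add continuous_const).div_const 2)).continuousAt) hcoshA
      simpa [Complex.tanh_eq_sinh_div_cosh] using h
    have l2 : ContinuousAt
        (fun θ : ℂ => Complex.tanh ((θ + Complex.I * (Real.pi : ℂ) * ((2 / 18 : ℝ) : ℂ)) / 2)) θ₀ := by
      have h : ContinuousAt (fun θ : ℂ => Complex.sinh ((θ + Complex.I * (Real.pi : ℂ) * ((2 / 18 : ℝ) : ℂ)) / 2) / Complex.cosh ((θ + Complex.I * (Real.pi : ℂ) * ((2 / 18 : ℝ) : ℂ)) / 2)) θ₀ :=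
        ContinuousAt.div ((Complex.continuous_sinh.comp ((continuous_id.add continuous_const).div_const 2)).continuousAt)
          ((Complex.continuous_cosh.comp ((continuous_id.add continuous_const).div_const 2)).continuousAt) hcoshB
      simpa [Complex.tanh_eq_sinh_div_cosh] using h
    have l3 : ContinuousAt
        (fun θ : ℂ => Complex.tanh ((θ - Complex.I * (Real.pi : ℂ) * ((2 / 18 : ℝ) : ℂ)) / 2)) θ₀ := by
      have h : ContinuousAt (fun θ : ℂ => Complex.sinh ((θ - Complex.I * (Real.pi : ℂ) * ((2 / 18 : ℝ) : ℂ)) / 2) / Complex.cosh ((θ - Complex.I * (Real.pi : ℂ) * ((2 / 18 : ℝ) : ℂ)) / 2)) θ₀ :=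
        ContinuousAt.div ((Complex.continuous_sinh.comp ((continuous_id.sub continuous_const).div_const 2)).continuousAt)
          ((Complex.continuous_cosh.comp ((continuous_id.sub continuous_const).div_const 2)).continuousAt) hcoshC
      simpa [Complex.tanh_eq_sinh_div_cosh] using h
    simp only [fblock]
    exact l1.neg.mul (l2.div l3 htanhC)
  have final := limA.mul (cB.tendsto.mono_left nhdsWithin_le_nhds)
  have hreal : -2 * Real.tan (10 * Real.pi / 18) *
      (Real.tan (Real.pi / 3) / Real.tan (2 * Real.pi / 9)) =
      2 * Real.sqrt 3 * (Real.cos (Real.pi / 18) / Real.sin (Real.pi / 18)) *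
        (Real.cos (2 * Real.pi / 9) / Real.sin (2 * Real.pi / 9)) := by
    rw [Real.tan_eq_sin_div_cos, Real.tan_eq_sin_div_cos, Real.tan_eq_sin_div_cos, e1, e2,
      Real.sin_pi_div_three, Real.cos_pi_div_three]
    field_simp
  have hval : 2 * (-Complex.tanh ((θ₀ + θ₀) / 2) * fblock (2 / 18) θ₀) =
      Complex.I * ((2 * Real.sqrt 3 * (Real.cos (Real.pi / 18) / Real.sin (Real.pi / 18)) *
        (Real.cos (2 * Real.pi / 9) / Real.sin (2 * Real.pi / 9)) : ℝ) : ℂ) := by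
    simp only [fblock]
    rw [hA, hB, hC, Complex.tanh_mul_I, Complex.tanh_mul_I, Complex.tanh_mul_I,
      ← Complex.ofReal_tan, ← Complex.ofReal_tan, ← Complex.ofReal_tan,
      mul_div_mul_right _ _ Complex.I_ne_zero]
    calc (2 : ℂ) * (-(↑(Real.tan (10 * Real.pi / 18)) * Complex.I) *
          (↑(Real.tan (Real.pi / 3)) / ↑(Real.tan (2 * Real.pi / 9))))
        = Complex.I * ((-2 * Real.tan (10 * Real.pi / 18) *
            (Real.tan (Real.pi / 3) / Real.tan (2 * Real.pi / 9)) : ℝ) : ℂ) := by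
          push_cast; ring
      _ = _ := by rw [hreal]
  rw [← hval]
  exact final.congr (fun θ => (key θ).symm)
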